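/- For n ≥ 3, every isometry t of the metric space (Sym(n), d_H) is of the form t(φ) = α φ β⁻¹ for all φ, or of the form t(φ) = α φ⁻¹ β⁻¹ for all φ, for some α, β ∈ Sym(n), and this representation is unique. -/

import Mathlib

open Finset Equiv


/-- The Hamming distance between two permutations of `Fin n`. -/
def hdist {n : ℕ} (φ ψ : Equiv.Perm (Fin n)) : ℕ :=
  (Finset.univ.filter fun i => φ i ≠ ψ i).card


/- Auxiliary machinery -/
section Aux
variable {n : ℕ}


variable {n : ℕ}

lemma hdist_self (φ : Perm (Fin n)) : hdist φ φ = 0 := by simp [hdist]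

lemma hdist_comm (φ ψ : Perm (Fin n)) : hdist φ ψ = hdist ψ φ := by
  unfold hdist; congr 1; ext i; simp [ne_comm]

lemma hdist_mul_left (α φ ψ : Perm (Fin n)) : hdist (α*φ) (α*ψ) = hdist φ ψ := by
  unfold hdist; congr 1; ext i; simp [Equiv.Perm.mul_apply]

lemma hdist_mul_right (φ ψ β : Perm (Fin n)) : hdist (φ*β) (ψ*β) = hdist φ ψ := by
  unfold hdist
  apply Finset.card_bij (fun a _ => β a)
  · intro a ha; rw [mem_filter] at ha ⊢; simpa using ha.2
  · intro a ha b hb h; exact β.injective h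
  · intro b hb; refine ⟨β⁻¹ b, ?_, by simp⟩; rw [mem_filter] at hb ⊢; simpa using hb.2

lemma hdist_inv (φ ψ : Perm (Fin n)) : hdist φ⁻¹ ψ⁻¹ = hdist φ ψ := by
  unfold hdist
  apply Finset.card_bij (fun a _ => ψ⁻¹ a)
  · intro a ha; simp at ha ⊢
    intro h; apply ha
    have : ψ⁻¹ a = φ⁻¹ a := by
      apply φ.injective; simp [h]
    exact this.symm
  · intro a ha b hb h; exact (ψ⁻¹).injective h
  · intro b hb; refine ⟨ψ b, ?_, by simp⟩
    simp at hb ⊢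
    intro h; apply hb
    have := congrArg φ h
    simpa using this.symm


def cyc (a b c : Fin n) : Equiv.Perm (Fin n) := Equiv.swap a b * Equiv.swap b c

lemma cyc_apply (a b c : Fin n) (hab : a ≠ b) (hac : a ≠ c) (hbc : b ≠ c) (x : Fin n) :
    cyc a b c x = if x = a then b else if x = b then c else if x = c then a else x := by
  unfold cyc
  simp only [Equiv.Perm.mul_apply, Equiv.swap_apply_def]
  split_ifs <;> grind

lemma card_filter_pair (a b : Fin n) (hab : a ≠ b) (P Q : Prop) [Decidable P] [Decidable Q] :
    (univ.filter fun i => (i = a ∧ P) ∨ (i = b ∧ Q)).card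
      = (if P then 1 else 0) + (if Q then 1 else 0) := by
  split_ifs with hP hQ hQ
  · rw [show (univ.filter fun i => (i = a ∧ P) ∨ (i = b ∧ Q)) = {a, b} from by
      ext i; simp [hP, hQ]]
    rw [Finset.card_insert_of_notMem (by simp [hab]), Finset.card_singleton]
  · rw [show (univ.filter fun i => (i = a ∧ P) ∨ (i = b ∧ Q)) = {a} from by
      ext i; simp [hP, hQ]]
    simp
  · rw [show (univ.filter fun i => (i = a ∧ P) ∨ (i = b ∧ Q)) = {b} from by
      ext i; simp [hP, hQ]]
    simp
  · rw [show (univ.filter fun i => (i = a ∧ P) ∨ (i = b ∧ Q)) = ∅ from by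
      ext i; simp [hP, hQ]]
    simp

lemma card_filter_single (c : Fin n) (R : Prop) [Decidable R] :
    (univ.filter fun i => (i = c ∧ R)).card = (if R then 1 else 0) := by
  split_ifs with hR
  · rw [show (univ.filter fun i => (i = c ∧ R)) = {c} from by ext i; simp [hR]]; simp
  · rw [show (univ.filter fun i => (i = c ∧ R)) = ∅ from by ext i; simp [hR]]; simp

lemma card_filter_triple (a b c : Fin n) (hab : a ≠ b) (hac : a ≠ c) (hbc : b ≠ c)
    (P Q R : Prop) [Decidable P] [Decidable Q] [Decidable R] :
    (univ.filter fun i => (i = a ∧ P) ∨ (i = b ∧ Q) ∨ (i = c ∧ R)).card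
      = (if P then 1 else 0) + (if Q then 1 else 0) + (if R then 1 else 0) := by
  have : (univ.filter fun i => (i = a ∧ P) ∨ (i = b ∧ Q) ∨ (i = c ∧ R))
      = (univ.filter fun i => (i = a ∧ P) ∨ (i = b ∧ Q)) ∪ (univ.filter fun i => (i = c ∧ R)) := by
    ext i; simp; tauto
  rw [this, Finset.card_union_of_disjoint, card_filter_pair a b hab, card_filter_single c R]
  rw [Finset.disjoint_left]
  intro i hi hj
  simp at hi hj
  rcases hi with ⟨h1, _⟩ | ⟨h1, _⟩
  · exact hac (h1.symm.trans hj.1)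
  · exact hbc (h1.symm.trans hj.1)

lemma hdist_one (φ : Perm (Fin n)) : hdist φ 1 = (univ.filter fun i => φ i ≠ i).card := by
  simp [hdist]; rfl

lemma hdist_key (φ ψ : Perm (Fin n)) :
    hdist φ ψ + ((univ.filter fun i => φ i ≠ i ∧ ψ i ≠ i).card
      + (univ.filter fun i => φ i = ψ i ∧ φ i ≠ i).card)
      = hdist φ 1 + hdist ψ 1 := by
  classical
  rw [hdist_one, hdist_one]
  set A := univ.filter fun i => φ i ≠ i with hA
  set B := univ.filter fun i => ψ i ≠ i with hB
  set D := univ.filter fun i => φ i ≠ ψ i with hD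
  set E := univ.filter fun i => φ i = ψ i ∧ φ i ≠ i with hE
  have hdisj : Disjoint D E := by
    rw [Finset.disjoint_left]
    intro i hi hj
    rw [hD, mem_filter] at hi
    rw [hE, mem_filter] at hj
    exact hi.2 hj.2.1
  have hunion : D ∪ E = A ∪ B := by
    ext i
    simp only [hA, hB, hD, hE, mem_union, mem_filter, mem_univ, true_and]
    by_cases h1 : φ i = i <;> by_cases h2 : ψ i = i <;> simp [h1, h2] <;> tauto
  have hAB : A ∩ B = univ.filter fun i => φ i ≠ i ∧ ψ i ≠ i := by
    ext i
    simp only [hA, hB, mem_inter, mem_filter, mem_univ, true_and]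
  have hc1 : D.card + E.card = (A ∪ B).card := by
    rw [← Finset.card_union_of_disjoint hdisj, hunion]
  have hc2 : (A ∪ B).card + (A ∩ B).card = A.card + B.card := Finset.card_union_add_card_inter A B
  have hdd : hdist φ ψ = D.card := rfl
  rw [hdd, ← hAB]
  omega

lemma hdist_swap_aux (φ : Perm (Fin n)) (a b : Fin n) (hab : a ≠ b) :
    hdist φ (Equiv.swap a b)
      + (((if φ a ≠ a then 1 else 0) + (if φ b ≠ b then 1 else 0))
        + ((if φ a = b then 1 else 0) + (if φ b = a then 1 else 0)))
      = hdist φ 1 + hdist (Equiv.swap a b) 1 := by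
  classical
  have key := hdist_key φ (Equiv.swap a b)
  have e1 : (univ.filter fun i => φ i ≠ i ∧ Equiv.swap a b i ≠ i).card
      = (if φ a ≠ a then 1 else 0) + (if φ b ≠ b then 1 else 0) := by
    rw [← card_filter_pair a b hab]
    congr 1
    ext i
    simp only [mem_filter, mem_univ, true_and]
    by_cases hia : i = a <;> by_cases hib : i = b <;>
      simp [hia, hib, Equiv.swap_apply_of_ne_of_ne, hab, hab.symm] <;> grind
  have e2 : (univ.filter fun i => φ i = Equiv.swap a b i ∧ φ i ≠ i).card
      = (if φ a = b then 1 else 0) + (if φ b = a then 1 else 0) := by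
    rw [← card_filter_pair a b hab]
    congr 1
    ext i
    simp only [mem_filter, mem_univ, true_and]
    by_cases hia : i = a <;> by_cases hib : i = b <;>
      simp [hia, hib, Equiv.swap_apply_of_ne_of_ne, hab, hab.symm] <;> grind
  rw [e1, e2] at key
  omega

lemma wt_swap (a b : Fin n) (hab : a ≠ b) : hdist (Equiv.swap a b) 1 = 2 := by
  have h := hdist_swap_aux (Equiv.swap a b) a b hab
  rw [hdist_self] at h
  simp [Equiv.swap_apply_left, Equiv.swap_apply_right, hab, hab.symm] at h
  omega

lemma hdist_swap (φ : Perm (Fin n)) (a b : Fin n) (hab : a ≠ b) :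
    hdist φ (Equiv.swap a b)
      + (((if φ a ≠ a then 1 else 0) + (if φ b ≠ b then 1 else 0))
        + ((if φ a = b then 1 else 0) + (if φ b = a then 1 else 0)))
      = hdist φ 1 + 2 := by
  rw [← wt_swap a b hab]
  exact hdist_swap_aux φ a b hab

lemma hdist_cyc_aux (φ : Perm (Fin n)) (a b c : Fin n)
    (hab : a ≠ b) (hac : a ≠ c) (hbc : b ≠ c) :
    hdist φ (cyc a b c)
      + (((if φ a ≠ a then 1 else 0) + (if φ b ≠ b then 1 else 0) + (if φ c ≠ c then 1 else 0))
        + ((if φ a = b then 1 else 0) + (if φ b = c then 1 else 0) + (if φ c = a then 1 else 0)))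
      = hdist φ 1 + hdist (cyc a b c) 1 := by
  classical
  have key := hdist_key φ (cyc a b c)
  have e1 : (univ.filter fun i => φ i ≠ i ∧ cyc a b c i ≠ i).card
      = (if φ a ≠ a then 1 else 0) + (if φ b ≠ b then 1 else 0) + (if φ c ≠ c then 1 else 0) := by
    rw [← card_filter_triple a b c hab hac hbc]
    congr 1
    ext i
    simp only [mem_filter, mem_univ, true_and]
    rw [cyc_apply a b c hab hac hbc i]
    by_cases hia : i = a <;> by_cases hib : i = b <;> by_cases hic : i = c <;>
      simp [hia, hib, hic, hab, hac, hbc, hab.symm, hac.symm, hbc.symm] <;> grind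
  have e2 : (univ.filter fun i => φ i = cyc a b c i ∧ φ i ≠ i).card
      = (if φ a = b then 1 else 0) + (if φ b = c then 1 else 0) + (if φ c = a then 1 else 0) := by
    rw [← card_filter_triple a b c hab hac hbc]
    congr 1
    ext i
    simp only [mem_filter, mem_univ, true_and]
    rw [cyc_apply a b c hab hac hbc i]
    by_cases hia : i = a <;> by_cases hib : i = b <;> by_cases hic : i = c <;>
      simp [hia, hib, hic, hab, hac, hbc, hab.symm, hac.symm, hbc.symm] <;> grind
  rw [e1, e2] at key
  omega

lemma cyc_app_a (a b c : Fin n) (hab : a ≠ b) (hac : a ≠ c) (hbc : b ≠ c) : cyc a b c a = b := by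
  rw [cyc_apply a b c hab hac hbc]; simp

lemma cyc_app_b (a b c : Fin n) (hab : a ≠ b) (hac : a ≠ c) (hbc : b ≠ c) : cyc a b c b = c := by
  rw [cyc_apply a b c hab hac hbc]; simp [hab.symm, hbc]

lemma cyc_app_c (a b c : Fin n) (hab : a ≠ b) (hac : a ≠ c) (hbc : b ≠ c) : cyc a b c c = a := by
  rw [cyc_apply a b c hab hac hbc]; simp [hac.symm, hbc.symm]

lemma wt_cyc (a b c : Fin n) (hab : a ≠ b) (hac : a ≠ c) (hbc : b ≠ c) :
    hdist (cyc a b c) 1 = 3 := by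
  have h := hdist_cyc_aux (cyc a b c) a b c hab hac hbc
  rw [hdist_self] at h
  rw [cyc_app_a a b c hab hac hbc, cyc_app_b a b c hab hac hbc, cyc_app_c a b c hab hac hbc] at h
  simp [hab, hac, hbc, hab.symm, hac.symm, hbc.symm] at h
  omega

lemma hdist_cyc (φ : Perm (Fin n)) (a b c : Fin n)
    (hab : a ≠ b) (hac : a ≠ c) (hbc : b ≠ c) :
    hdist φ (cyc a b c)
      + (((if φ a ≠ a then 1 else 0) + (if φ b ≠ b then 1 else 0) + (if φ c ≠ c then 1 else 0))
        + ((if φ a = b then 1 else 0) + (if φ b = c then 1 else 0) + (if φ c = a then 1 else 0)))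
      = hdist φ 1 + 3 := by
  rw [← wt_cyc a b c hab hac hbc]
  exact hdist_cyc_aux φ a b c hab hac hbc

lemma moved_apply (φ : Perm (Fin n)) {i : Fin n} (h : φ i ≠ i) : φ (φ i) ≠ φ i :=
  fun e => h (φ.injective e)

lemma wt_two_swap (φ : Perm (Fin n)) (h : hdist φ 1 = 2) :
    ∃ a b, a ≠ b ∧ φ = Equiv.swap a b := by
  classical
  rw [hdist_one] at h
  obtain ⟨a, b, hab, hs⟩ := Finset.card_eq_two.mp h
  have hmem : ∀ i, φ i ≠ i ↔ (i = a ∨ i = b) := by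
    intro i
    rw [show (i = a ∨ i = b) ↔ i ∈ ({a, b} : Finset (Fin n)) by simp, ← hs]
    simp
  have ha : φ a ≠ a := (hmem a).mpr (Or.inl rfl)
  have hb : φ b ≠ b := (hmem b).mpr (Or.inr rfl)
  have hfa : φ a = b := by
    rcases (hmem (φ a)).mp (moved_apply φ ha) with h' | h'
    · exact absurd h' ha
    · exact h'
  have hfb : φ b = a := by
    rcases (hmem (φ b)).mp (moved_apply φ hb) with h' | h'
    · exact h'
    · exact absurd h' hb
  refine ⟨a, b, hab, ?_⟩
  ext i
  by_cases hia : i = a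
  · simp [hia, hfa]
  by_cases hib : i = b
  · simp [hib, hfb]
  · have : φ i = i := by
      by_contra hne
      rcases (hmem i).mp hne with h' | h' <;> [exact hia h'; exact hib h']
    simp [this, Equiv.swap_apply_of_ne_of_ne hia hib]

lemma wt_three_cyc (φ : Perm (Fin n)) (h : hdist φ 1 = 3) :
    ∃ a b c, a ≠ b ∧ a ≠ c ∧ b ≠ c ∧ φ = cyc a b c := by
  classical
  rw [hdist_one] at h
  obtain ⟨a, b, c, hab, hac, hbc, hs⟩ := Finset.card_eq_three.mp h
  have hmem : ∀ i, φ i ≠ i ↔ (i = a ∨ i = b ∨ i = c) := by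
    intro i
    rw [show (i = a ∨ i = b ∨ i = c) ↔ i ∈ ({a, b, c} : Finset (Fin n)) by simp, ← hs]
    simp
  have ha : φ a ≠ a := (hmem a).mpr (Or.inl rfl)
  have hb : φ b ≠ b := (hmem b).mpr (Or.inr (Or.inl rfl))
  have hc : φ c ≠ c := (hmem c).mpr (Or.inr (Or.inr rfl))
  have hfix : ∀ i, i ≠ a → i ≠ b → i ≠ c → φ i = i := by
    intro i h1 h2 h3
    by_contra hne
    rcases (hmem i).mp hne with h' | h' | h' <;> [exact h1 h'; exact h2 h'; exact h3 h']
  have ext_of : ∀ (x y z : Fin n), x ≠ y → x ≠ z → y ≠ z →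
      φ x = y → φ y = z → φ z = x → ({x, y, z} : Finset (Fin n)) = {a, b, c} → φ = cyc x y z := by
    intro x y z hxy hxz hyz h1 h2 h3 hset
    ext i
    rw [cyc_apply x y z hxy hxz hyz]
    by_cases hix : i = x
    · simp [hix, h1]
    by_cases hiy : i = y
    · simp [hiy, hxy.symm, h2]
    by_cases hiz : i = z
    · simp [hiz, hxz.symm, hyz.symm, h3]
    · have hmem' : i ∉ ({a,b,c} : Finset (Fin n)) := by
        rw [← hset]; simp [hix, hiy, hiz]
      simp at hmem'
      simp [hix, hiy, hiz, hfix i hmem'.1 hmem'.2.1 hmem'.2.2]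
  rcases (hmem (φ a)).mp (moved_apply φ ha) with h1 | h1 | h1
  · exact absurd h1 ha
  · -- φ a = b
    have h2 : φ b = c := by
      rcases (hmem (φ b)).mp (moved_apply φ hb) with h' | h' | h'
      · -- φ b = a : derive contradiction via φ c
        exfalso
        rcases (hmem (φ c)).mp (moved_apply φ hc) with h'' | h'' | h''
        · exact hbc (φ.injective (h'.trans h''.symm))
        · exact hac (φ.injective (h1.trans h''.symm))
        · exact hc h''
      · exact absurd h' hb
      · exact h'
    have h3 : φ c = a := by
      rcases (hmem (φ c)).mp (moved_apply φ hc) with h' | h' | h'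
      · exact h'
      · exact absurd (φ.injective (h1.trans h'.symm)) hac
      · exact absurd h' hc
    exact ⟨a, b, c, hab, hac, hbc, ext_of a b c hab hac hbc h1 h2 h3 rfl⟩
  · -- φ a = c
    have h3 : φ c = b := by
      rcases (hmem (φ c)).mp (moved_apply φ hc) with h' | h' | h'
      · -- φ c = a : contradiction via φ b
        exfalso
        rcases (hmem (φ b)).mp (moved_apply φ hb) with h'' | h'' | h''
        · exact hbc (φ.injective (h''.trans h'.symm))
        · exact hb h''
        · exact hab (φ.injective (h''.trans h1.symm)).symm
      · exact h'
      · exact absurd h' hc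
    have h2 : φ b = a := by
      rcases (hmem (φ b)).mp (moved_apply φ hb) with h' | h' | h'
      · exact h'
      · exact absurd h' hb
      · exact absurd (φ.injective (h'.trans h1.symm)).symm hab
    refine ⟨a, c, b, hac, hab, hbc.symm, ext_of a c b hac hab hbc.symm h1 h3 h2 ?_⟩
    ext i; simp; tauto

lemma det_fix (φ φ' : Equiv.Perm (Fin n))
    (H1 : hdist φ' 1 = hdist φ 1)
    (H2 : ∀ a b, a ≠ b → hdist φ' (Equiv.swap a b) = hdist φ (Equiv.swap a b)) :
    ∀ a, φ a = a → φ' a = a := by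
  intro a ha
  by_contra hne
  set b := φ' a with hb
  have hab : a ≠ b := fun h => hne (hb ▸ h.symm)
  have e := hdist_swap φ a b hab
  have e' := hdist_swap φ' a b hab
  rw [H1, H2 a b hab] at e'
  have h1' : φ' a = b := rfl
  have h2' : φ' b ≠ b := fun h => hab (φ'.injective (h1'.trans h.symm))
  have h3 : φ a ≠ b := fun h => hab (ha.symm.trans h)
  have h4 : φ b ≠ a := fun h => hab (φ.injective (ha.trans h.symm))
  simp only [ha, h1', h2', h3, h4] at e e'
  by_cases h5 : φ b = b <;> by_cases h6 : φ' b = a <;>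
    simp [h5, h6, hne, hab, hab.symm] at e e' <;> omega

lemma det (φ φ' : Equiv.Perm (Fin n))
    (H1 : hdist φ' 1 = hdist φ 1)
    (H2 : ∀ a b, a ≠ b → hdist φ' (Equiv.swap a b) = hdist φ (Equiv.swap a b))
    (H3 : ∀ a b c, a ≠ b → a ≠ c → b ≠ c → hdist φ' (cyc a b c) = hdist φ (cyc a b c)) :
    φ' = φ := by
  have Hfix : ∀ a, φ a = a ↔ φ' a = a := by
    intro a
    constructor
    · exact det_fix φ φ' H1 H2 a
    · exact det_fix φ' φ H1.symm (fun a b hab => (H2 a b hab).symm) a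
  apply Equiv.ext
  intro i
  by_cases hfi : φ i = i
  · rw [(Hfix i).mp hfi, hfi]
  obtain ⟨j, hj⟩ : ∃ j, φ i = j := ⟨φ i, rfl⟩
  have hij : i ≠ j := fun h => hfi (h ▸ hj)
  have hfj : φ j ≠ j := fun h => hij (φ.injective (hj.trans h.symm))
  have hfi' : φ' i ≠ i := fun h => hfi ((Hfix i).mpr h)
  have hfj' : φ' j ≠ j := fun h => hfj ((Hfix j).mpr h)
  rw [hj]
  by_contra hne
  have e := hdist_swap φ i j hij
  have e' := hdist_swap φ' i j hij
  rw [H1, H2 i j hij] at e'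
  rw [if_pos hfi, if_pos hfj, if_pos hj] at e
  rw [if_pos hfi', if_pos hfj', if_neg hne] at e'
  by_cases hk : φ j = i
  · rw [if_pos hk] at e
    by_cases h6 : φ' j = i
    · rw [if_pos h6] at e'; omega
    · rw [if_neg h6] at e'; omega
  · rw [if_neg hk] at e
    obtain ⟨k, hkj⟩ : ∃ k, φ j = k := ⟨φ j, rfl⟩
    have hjk : j ≠ k := fun h => hfj (h ▸ hkj)
    have hik : i ≠ k := fun h => hk (h ▸ hkj)
    have hfk : φ k ≠ k := fun h => hjk (φ.injective (hkj.trans h.symm))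
    have hfk' : φ' k ≠ k := fun h => hfk ((Hfix k).mpr h)
    have h6 : φ' j = i := by
      by_cases h6 : φ' j = i
      · exact h6
      · exfalso; rw [if_neg h6] at e'; omega
    have h7 : ¬ φ' j = k := fun h => hik (h6.symm.trans h)
    have h8 : ¬ φ' k = i := fun h => hjk (φ'.injective (h.trans h6.symm)).symm
    have et := hdist_cyc φ i j k hij hik hjk
    have et' := hdist_cyc φ' i j k hij hik hjk
    rw [H1, H3 i j k hij hik hjk] at et'
    rw [if_pos hfi, if_pos hfj, if_pos hfk, if_pos hj, if_pos hkj] at et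
    rw [if_pos hfi', if_pos hfj', if_pos hfk', if_neg hne, if_neg h7, if_neg h8] at et'
    by_cases h9 : φ k = i
    · rw [if_pos h9] at et; omega
    · rw [if_neg h9] at et; omega

lemma swap_moved_iff {a b : Fin n} (hab : a ≠ b) (x : Fin n) :
    Equiv.swap a b x ≠ x ↔ (x = a ∨ x = b) := by
  rw [Equiv.swap_apply_ne_self_iff]
  simp [hab]

lemma cyc_moved {u v w : Fin n} (huv : u ≠ v) (huw : u ≠ w) (hvw : v ≠ w) {x : Fin n}
    (h : cyc u v w x ≠ x) : x = u ∨ x = v ∨ x = w := by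
  by_contra hc
  push_neg at hc
  rw [cyc_apply u v w huv huw hvw, if_neg hc.1, if_neg hc.2.1, if_neg hc.2.2] at h
  exact h rfl

lemma swap_of_moves {a b p q : Fin n} (hab : a ≠ b) (hpq : p ≠ q)
    (hp : Equiv.swap a b p ≠ p) (hq : Equiv.swap a b q ≠ q) :
    Equiv.swap a b = Equiv.swap p q := by
  rcases (swap_moved_iff hab p).mp hp with h1 | h1 <;>
    rcases (swap_moved_iff hab q).mp hq with h2 | h2
  · exact absurd (h1.trans h2.symm) hpq
  · rw [h1, h2]
  · rw [h1, h2, Equiv.swap_comm]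
  · exact absurd (h1.trans h2.symm) hpq

lemma hdist_swap_swap_adj {a b c : Fin n} (hab : a ≠ b) (hac : a ≠ c) (hbc : b ≠ c) :
    hdist (Equiv.swap a c) (Equiv.swap a b) = 3 := by
  have e := hdist_swap (Equiv.swap a c) a b hab
  rw [wt_swap a c hac] at e
  rw [if_pos (by simp [Equiv.swap_apply_left]; exact hac.symm),
      if_neg (by simp [Equiv.swap_apply_of_ne_of_ne hab.symm hbc]),
      if_neg (by simp [Equiv.swap_apply_left]; exact hbc.symm),
      if_neg (by simp [Equiv.swap_apply_of_ne_of_ne hab.symm hbc]; exact hab.symm)] at e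
  omega

lemma swaps_dist3_shared {a b c d : Fin n} (hab : a ≠ b) (hcd : c ≠ d)
    (h3 : hdist (Equiv.swap a b) (Equiv.swap c d) = 3) :
    ∃ p, (Equiv.swap a b p ≠ p ∧ Equiv.swap c d p ≠ p) ∧
      ∀ q, Equiv.swap a b q ≠ q → Equiv.swap c d q ≠ q → q = p := by
  have e := hdist_swap (Equiv.swap c d) a b hab
  rw [wt_swap c d hcd, hdist_comm, h3] at e
  by_cases hA : Equiv.swap c d a = a <;> by_cases hB : Equiv.swap c d b = b
  · exfalso
    rw [if_neg (not_not_intro hA), if_neg (not_not_intro hB),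
        if_neg (fun h : Equiv.swap c d a = b => hab (hA.symm.trans h)),
        if_neg (fun h : Equiv.swap c d b = a => hab (hB.symm.trans h).symm)] at e
    omega
  · -- b is the shared point
    have hC : ¬ Equiv.swap c d b = a := by
      intro h
      rw [if_pos (fun h' => hB h'), if_neg (not_not_intro hA),
          if_neg (fun h' : Equiv.swap c d a = b => hab (hA.symm.trans h')), if_pos h] at e
      omega
    refine ⟨b, ⟨by rw [swap_moved_iff hab]; right; rfl, hB⟩, fun q hq1 hq2 => ?_⟩
    rcases (swap_moved_iff hab q).mp hq1 with h | h
    · exact absurd (h ▸ hq2) (not_not_intro hA)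
    · exact h
  · -- a is the shared point
    have hC : ¬ Equiv.swap c d a = b := by
      intro h
      rw [if_pos (fun h' => hA h'), if_neg (not_not_intro hB), if_pos h,
          if_neg (fun h' : Equiv.swap c d b = a => hab (hB.symm.trans h').symm)] at e
      omega
    refine ⟨a, ⟨by rw [swap_moved_iff hab]; left; rfl, hA⟩, fun q hq1 hq2 => ?_⟩
    rcases (swap_moved_iff hab q).mp hq1 with h | h
    · exact h
    · exact absurd (h ▸ hq2) (not_not_intro hB)
  · exfalso
    have hC : ¬ Equiv.swap c d a = b := by
      intro h
      rw [if_pos (fun h' => hA h'), if_pos (fun h' => hB h'), if_pos h] at e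
      split_ifs at e <;> omega
    have hD : ¬ Equiv.swap c d b = a := by
      intro h
      rw [if_pos (fun h' => hA h'), if_pos (fun h' => hB h'), if_neg hC, if_pos h] at e
      omega
    rw [if_pos (fun h' => hA h'), if_pos (fun h' => hB h'), if_neg hC, if_neg hD] at e
    omega

lemma cyc_swap_xy {x y z : Fin n} (hxy : x ≠ y) (hxz : x ≠ z) (hyz : y ≠ z) :
    hdist (cyc x y z) (Equiv.swap x y) = 2 := by
  have e := hdist_swap (cyc x y z) x y hxy
  rw [wt_cyc x y z hxy hxz hyz] at e
  rw [if_pos (show cyc x y z x ≠ x by rw [cyc_app_a x y z hxy hxz hyz]; exact hxy.symm),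
      if_pos (show cyc x y z y ≠ y by rw [cyc_app_b x y z hxy hxz hyz]; exact hyz.symm),
      if_pos (cyc_app_a x y z hxy hxz hyz),
      if_neg (show ¬ cyc x y z y = x by rw [cyc_app_b x y z hxy hxz hyz]; exact fun h => hxz h.symm)] at e
  omega

lemma cyc_swap_xz {x y z : Fin n} (hxy : x ≠ y) (hxz : x ≠ z) (hyz : y ≠ z) :
    hdist (cyc x y z) (Equiv.swap x z) = 2 := by
  have e := hdist_swap (cyc x y z) x z hxz
  rw [wt_cyc x y z hxy hxz hyz] at e
  rw [if_pos (show cyc x y z x ≠ x by rw [cyc_app_a x y z hxy hxz hyz]; exact hxy.symm),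
      if_pos (show cyc x y z z ≠ z by rw [cyc_app_c x y z hxy hxz hyz]; exact hxz),
      if_neg (show ¬ cyc x y z x = z by rw [cyc_app_a x y z hxy hxz hyz]; exact hyz),
      if_pos (cyc_app_c x y z hxy hxz hyz)] at e
  omega

lemma cyc_swap_yz {x y z : Fin n} (hxy : x ≠ y) (hxz : x ≠ z) (hyz : y ≠ z) :
    hdist (cyc x y z) (Equiv.swap y z) = 2 := by
  have e := hdist_swap (cyc x y z) y z hyz
  rw [wt_cyc x y z hxy hxz hyz] at e
  rw [if_pos (show cyc x y z y ≠ y by rw [cyc_app_b x y z hxy hxz hyz]; exact hyz.symm),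
      if_pos (show cyc x y z z ≠ z by rw [cyc_app_c x y z hxy hxz hyz]; exact hxz),
      if_pos (cyc_app_b x y z hxy hxz hyz),
      if_neg (show ¬ cyc x y z z = y by rw [cyc_app_c x y z hxy hxz hyz]; exact hxy)] at e
  omega

lemma cyc_swap_d2_supp {u v w a b : Fin n} (huv : u ≠ v) (huw : u ≠ w) (hvw : v ≠ w)
    (hab : a ≠ b) (h2 : hdist (cyc u v w) (Equiv.swap a b) = 2) :
    (cyc u v w a ≠ a) ∧ (cyc u v w b ≠ b) := by
  have e := hdist_swap (cyc u v w) a b hab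
  rw [wt_cyc u v w huv huw hvw, h2] at e
  constructor
  · by_contra hA
    rw [if_neg (not_not_intro hA),
        if_neg (fun h : cyc u v w a = b => hab (hA.symm.trans h))] at e
    by_cases hB : cyc u v w b = b
    · rw [if_neg (not_not_intro hB),
          if_neg (fun h : cyc u v w b = a => hab (hB.symm.trans h).symm)] at e
      omega
    · rw [if_pos hB] at e
      split_ifs at e <;> omega
  · by_contra hB
    rw [if_neg (not_not_intro hB),
        if_neg (fun h : cyc u v w b = a => hab (hB.symm.trans h).symm)] at e
    by_cases hA : cyc u v w a = a
    · rw [if_neg (not_not_intro hA),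
          if_neg (fun h : cyc u v w a = b => hab (hA.symm.trans h))] at e
      omega
    · rw [if_pos hA] at e
      split_ifs at e <;> omega

lemma star_criterion {τ1 τ2 τ3 : Equiv.Perm (Fin n)}
    (h1 : hdist τ1 1 = 2) (h2 : hdist τ2 1 = 2) (h3 : hdist τ3 1 = 2)
    (h12 : τ1 ≠ τ2) (h13 : τ1 ≠ τ3) (h23 : τ2 ≠ τ3)
    (d12 : hdist τ1 τ2 = 3) (d13 : hdist τ1 τ3 = 3) (d23 : hdist τ2 τ3 = 3) :
    (∃ p, τ1 p ≠ p ∧ τ2 p ≠ p ∧ τ3 p ≠ p) ↔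
      ¬ ∃ ρ, hdist ρ 1 = 3 ∧ hdist ρ τ1 = 2 ∧ hdist ρ τ2 = 2 ∧ hdist ρ τ3 = 2 := by
  classical
  obtain ⟨a1, b1, hab1, rfl⟩ := wt_two_swap τ1 h1
  obtain ⟨a2, b2, hab2, rfl⟩ := wt_two_swap τ2 h2
  obtain ⟨a3, b3, hab3, rfl⟩ := wt_two_swap τ3 h3
  constructor
  · rintro ⟨p, hp1, hp2, hp3⟩ ⟨ρ, hw, e1, e2, e3⟩
    obtain ⟨u, v, w, huv, huw, hvw, rfl⟩ := wt_three_cyc ρ hw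
    obtain ⟨m1a, m1b⟩ := cyc_swap_d2_supp huv huw hvw hab1 e1
    obtain ⟨m2a, m2b⟩ := cyc_swap_d2_supp huv huw hvw hab2 e2
    obtain ⟨m3a, m3b⟩ := cyc_swap_d2_supp huv huw hvw hab3 e3
    have hx1 : ∃ x, x ≠ p ∧ Equiv.swap a1 b1 = Equiv.swap p x ∧ cyc u v w x ≠ x ∧ cyc u v w p ≠ p := by
      rcases (swap_moved_iff hab1 p).mp hp1 with h | h
      · exact ⟨b1, fun hh => hab1 (hh.trans h).symm, by rw [h], m1b, by rw [h]; exact m1a⟩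
      · exact ⟨a1, fun hh => hab1 (hh.trans h), by rw [h, Equiv.swap_comm], m1a, by rw [h]; exact m1b⟩
    have hx2 : ∃ x, x ≠ p ∧ Equiv.swap a2 b2 = Equiv.swap p x ∧ cyc u v w x ≠ x := by
      rcases (swap_moved_iff hab2 p).mp hp2 with h | h
      · exact ⟨b2, fun hh => hab2 (hh.trans h).symm, by rw [h], m2b⟩
      · exact ⟨a2, fun hh => hab2 (hh.trans h), by rw [h, Equiv.swap_comm], m2a⟩
    have hx3 : ∃ x, x ≠ p ∧ Equiv.swap a3 b3 = Equiv.swap p x ∧ cyc u v w x ≠ x := by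
      rcases (swap_moved_iff hab3 p).mp hp3 with h | h
      · exact ⟨b3, fun hh => hab3 (hh.trans h).symm, by rw [h], m3b⟩
      · exact ⟨a3, fun hh => hab3 (hh.trans h), by rw [h, Equiv.swap_comm], m3a⟩
    obtain ⟨x1, hx1p, he1, hm1, hmp⟩ := hx1
    obtain ⟨x2, hx2p, he2, hm2⟩ := hx2
    obtain ⟨x3, hx3p, he3, hm3⟩ := hx3
    have h12' : x1 ≠ x2 := fun h => h12 (he1.trans (h ▸ he2.symm))
    have h13' : x1 ≠ x3 := fun h => h13 (he1.trans (h ▸ he3.symm))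
    have h23' : x2 ≠ x3 := fun h => h23 (he2.trans (h ▸ he3.symm))
    have c0 := cyc_moved huv huw hvw hmp
    have c1 := cyc_moved huv huw hvw hm1
    have c2 := cyc_moved huv huw hvw hm2
    have c3 := cyc_moved huv huw hvw hm3
    rcases c0 with h | h | h <;> rcases c1 with h' | h' | h' <;>
      rcases c2 with h'' | h'' | h'' <;> rcases c3 with h''' | h''' | h''' <;> grind
  · intro hno
    by_contra hnp
    apply hno
    obtain ⟨p, ⟨hp1, hp2⟩, hup⟩ := swaps_dist3_shared hab1 hab2 d12
    obtain ⟨q, ⟨hq1, hq3⟩, huq⟩ := swaps_dist3_shared hab1 hab3 d13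
    obtain ⟨r, ⟨hr2, hr3⟩, hur⟩ := swaps_dist3_shared hab2 hab3 d23
    have hpq : p ≠ q := fun h => hnp ⟨p, hp1, hp2, h ▸ hq3⟩
    have hpr : p ≠ r := fun h => hnp ⟨p, hp1, hp2, h ▸ hr3⟩
    have hqr : q ≠ r := fun h => hnp ⟨q, hq1, h ▸ hr2, hq3⟩
    have e1 : Equiv.swap a1 b1 = Equiv.swap p q := swap_of_moves hab1 hpq hp1 hq1
    have e2 : Equiv.swap a2 b2 = Equiv.swap p r := swap_of_moves hab2 hpr hp2 hr2
    have e3 : Equiv.swap a3 b3 = Equiv.swap q r := swap_of_moves hab3 hqr hq3 hr3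
    exact ⟨cyc p q r, wt_cyc p q r hpq hpr hqr,
      by rw [e1]; exact cyc_swap_xy hpq hpr hqr,
      by rw [e2]; exact cyc_swap_xz hpq hpr hqr,
      by rw [e3]; exact cyc_swap_yz hpq hpr hqr⟩

lemma swap_ne_swap {a b c : Fin n} (hab : a ≠ b) (hac : a ≠ c) (hbc : b ≠ c) :
    Equiv.swap a b ≠ Equiv.swap a c := by
  intro h
  have := congrArg (fun σ : Equiv.Perm (Fin n) => σ b) h
  simp [Equiv.swap_apply_right, Equiv.swap_apply_of_ne_of_ne hab.symm hbc] at this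
  exact hab this

lemma adj3 {a b c : Fin n} (hab : a ≠ b) (hac : a ≠ c) (hbc : b ≠ c) :
    hdist (Equiv.swap a b) (Equiv.swap a c) = 3 :=
  hdist_swap_swap_adj hac hab hbc.symm

lemma exists_third (hn : 3 ≤ n) (a b : Fin n) : ∃ c : Fin n, c ≠ a ∧ c ≠ b := by
  by_contra h
  push_neg at h
  have hsub : (univ : Finset (Fin n)) ⊆ {a, b} := by
    intro c _
    by_cases hc : c = a
    · simp [hc]
    · simp [h c hc]
  have hcard := Finset.card_le_card hsub
  have h2 : ({a, b} : Finset (Fin n)).card ≤ 2 :=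
    le_trans (Finset.card_insert_le _ _) (by simp)
  simp [Finset.card_univ] at hcard
  omega

lemma exists_second (hn : 3 ≤ n) (a : Fin n) : ∃ b : Fin n, b ≠ a := by
  obtain ⟨c, hc, _⟩ := exists_third hn a a
  exact ⟨c, hc⟩

section Iso
variable {u : Equiv.Perm (Fin n) → Equiv.Perm (Fin n)}
  (hbij : Function.Bijective u)
  (hiso : ∀ φ ψ, hdist (u φ) (u ψ) = hdist φ ψ)
  (h1 : u 1 = 1)

include hbij hiso h1

lemma iso_wt : ∀ φ, hdist (u φ) 1 = hdist φ 1 := by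
  intro φ; rw [← hiso φ 1, h1]

lemma iso_common_transfer (τ1 τ2 τ3 : Equiv.Perm (Fin n))
    (h1' : hdist τ1 1 = 2) (h2 : hdist τ2 1 = 2) (h3 : hdist τ3 1 = 2)
    (h12 : τ1 ≠ τ2) (h13 : τ1 ≠ τ3) (h23 : τ2 ≠ τ3)
    (d12 : hdist τ1 τ2 = 3) (d13 : hdist τ1 τ3 = 3) (d23 : hdist τ2 τ3 = 3) :
    (∃ p, τ1 p ≠ p ∧ τ2 p ≠ p ∧ τ3 p ≠ p) ↔
      (∃ p, u τ1 p ≠ p ∧ u τ2 p ≠ p ∧ u τ3 p ≠ p) := by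
  have hinj := hbij.injective
  have hrho : (∃ ρ, hdist ρ 1 = 3 ∧ hdist ρ τ1 = 2 ∧ hdist ρ τ2 = 2 ∧ hdist ρ τ3 = 2) ↔
      (∃ ρ, hdist ρ 1 = 3 ∧ hdist ρ (u τ1) = 2 ∧ hdist ρ (u τ2) = 2 ∧ hdist ρ (u τ3) = 2) := by
    constructor
    · rintro ⟨ρ, hw, e1, e2, e3⟩
      exact ⟨u ρ, (iso_wt hbij hiso h1 ρ).trans hw,
        (hiso ρ τ1).trans e1, (hiso ρ τ2).trans e2, (hiso ρ τ3).trans e3⟩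
    · rintro ⟨ρ', hw, e1, e2, e3⟩
      obtain ⟨ρ, rfl⟩ := hbij.surjective ρ'
      exact ⟨ρ, (iso_wt hbij hiso h1 ρ).symm.trans hw,
        (hiso ρ τ1).symm.trans e1, (hiso ρ τ2).symm.trans e2, (hiso ρ τ3).symm.trans e3⟩
  rw [star_criterion h1' h2 h3 h12 h13 h23 d12 d13 d23,
    star_criterion ((iso_wt hbij hiso h1 τ1).trans h1') ((iso_wt hbij hiso h1 τ2).trans h2)
      ((iso_wt hbij hiso h1 τ3).trans h3)
      (fun h => h12 (hinj h)) (fun h => h13 (hinj h)) (fun h => h23 (hinj h))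
      ((hiso τ1 τ2).trans d12) ((hiso τ1 τ3).trans d13) ((hiso τ2 τ3).trans d23)]
  exact not_congr hrho

lemma point_exists (hn : 3 ≤ n) (a : Fin n) :
    ∃ p, ∀ x, x ≠ a → (u (Equiv.swap a x)) p ≠ p := by
  classical
  obtain ⟨b, hba⟩ := exists_second hn a
  obtain ⟨c, hca, hcb⟩ := exists_third hn a b
  have hab : a ≠ b := hba.symm
  have hac : a ≠ c := hca.symm
  have hbc : b ≠ c := hcb.symm
  obtain ⟨A, B, hAB, hU1⟩ := wt_two_swap (u (Equiv.swap a b))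
    ((iso_wt hbij hiso h1 _).trans (wt_swap a b hab))
  obtain ⟨C, D, hCD, hU2⟩ := wt_two_swap (u (Equiv.swap a c))
    ((iso_wt hbij hiso h1 _).trans (wt_swap a c hac))
  have hd3 : hdist (u (Equiv.swap a b)) (u (Equiv.swap a c)) = 3 := by
    rw [hiso]; exact adj3 hab hac hbc
  rw [hU1, hU2] at hd3
  obtain ⟨p, ⟨hp1, hp2⟩, hpu⟩ := swaps_dist3_shared hAB hCD hd3
  refine ⟨p, fun x hxa => ?_⟩
  by_cases hxb : x = b
  · rw [hxb, hU1]; exact hp1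
  by_cases hxc : x = c
  · rw [hxc, hU2]; exact hp2
  -- x ∉ {a,b,c} : star transfer
  have hax : a ≠ x := fun h => hxa h.symm
  have hbx : b ≠ x := fun h => hxb h.symm
  have hcx : c ≠ x := fun h => hxc h.symm
  have hcommon : ∃ q, Equiv.swap a b q ≠ q ∧ Equiv.swap a c q ≠ q ∧ Equiv.swap a x q ≠ q := by
    refine ⟨a, ?_, ?_, ?_⟩ <;> (rw [swap_moved_iff]; left; rfl)
    exacts [hab, hac, hax]
  have htrans := iso_common_transfer hbij hiso h1 (Equiv.swap a b) (Equiv.swap a c) (Equiv.swap a x)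
    (wt_swap a b hab) (wt_swap a c hac) (wt_swap a x hax)
    (swap_ne_swap hab hac hbc) (swap_ne_swap hab hax hbx) (swap_ne_swap hac hax hcx)
    (adj3 hab hac hbc) (adj3 hab hax hbx) (adj3 hac hax hcx)
  obtain ⟨q, hq1, hq2, hq3⟩ := htrans.mp hcommon
  have : q = p := by
    apply hpu <;> [rw [← hU1]; rw [← hU2]]
    exacts [hq1, hq2]
  exact this ▸ hq3

lemma sigma_exists (hn : 3 ≤ n) :
    ∃ σ : Equiv.Perm (Fin n), ∀ a b, a ≠ b → u (Equiv.swap a b) = Equiv.swap (σ a) (σ b) := by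
  classical
  choose g hg using fun a => point_exists hbij hiso h1 hn a
  have humap : ∀ a b, a ≠ b → g a ≠ g b → u (Equiv.swap a b) = Equiv.swap (g a) (g b) := by
    intro a b hab hgab
    obtain ⟨A, B, hAB, hU⟩ := wt_two_swap (u (Equiv.swap a b))
      ((iso_wt hbij hiso h1 _).trans (wt_swap a b hab))
    have m1 : u (Equiv.swap a b) (g a) ≠ g a := hg a b (Ne.symm hab)
    have m2 : u (Equiv.swap a b) (g b) ≠ g b := by
      have := hg b a hab
      rw [Equiv.swap_comm b a] at this
      exact this
    rw [hU] at m1 m2 ⊢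
    exact swap_of_moves hAB hgab m1 m2
  have hginj : Function.Injective g := by
    intro a b hgab
    by_contra hab
    obtain ⟨c, hca, hcb⟩ := exists_third hn a b
    by_cases hgc : g c = g a
    · have hnc : ¬ ∃ q, Equiv.swap a b q ≠ q ∧ Equiv.swap a c q ≠ q ∧ Equiv.swap b c q ≠ q := by
        rintro ⟨q, hq1, hq2, hq3⟩
        rcases (swap_moved_iff hab q).mp hq1 with h | h
        · rw [h] at hq3
          exact hq3 (Equiv.swap_apply_of_ne_of_ne hab hca.symm)
        · rw [h] at hq2
          exact hq2 (Equiv.swap_apply_of_ne_of_ne (Ne.symm hab) hcb.symm)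
      have htr := iso_common_transfer hbij hiso h1 (Equiv.swap a b) (Equiv.swap a c) (Equiv.swap b c)
        (wt_swap a b hab) (wt_swap a c hca.symm) (wt_swap b c hcb.symm)
        (swap_ne_swap hab hca.symm hcb.symm)
        (by rw [Equiv.swap_comm a b]; exact swap_ne_swap (Ne.symm hab) hcb.symm hca.symm)
        (by rw [Equiv.swap_comm a c, Equiv.swap_comm b c]; exact swap_ne_swap hca hcb hab)
        (adj3 hab hca.symm hcb.symm)
        (by rw [Equiv.swap_comm a b]; exact adj3 (Ne.symm hab) hcb.symm hca.symm)
        (by rw [Equiv.swap_comm a c, Equiv.swap_comm b c]; exact adj3 hca hcb hab)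
      apply hnc
      apply htr.mpr
      refine ⟨g a, hg a b (Ne.symm hab), hg a c hca, ?_⟩
      have := hg b c hcb
      rw [← hgab] at this
      exact this
    · have e1 : u (Equiv.swap a c) = Equiv.swap (g a) (g c) :=
        humap a c hca.symm (fun h => hgc h.symm)
      have e2 : u (Equiv.swap b c) = Equiv.swap (g b) (g c) :=
        humap b c hcb.symm (fun h => hgc (h.symm.trans hgab.symm))
      rw [← hgab] at e2
      have heq : Equiv.swap a c = Equiv.swap b c := hbij.injective (e1.trans e2.symm)
      have := congrArg (fun σ : Equiv.Perm (Fin n) => σ c) heq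
      simp [Equiv.swap_apply_right] at this
      exact hab this
  refine ⟨Equiv.ofBijective g (Finite.injective_iff_bijective.mp hginj), fun a b hab => ?_⟩
  exact humap a b hab (fun h => hab (hginj h))
end Iso

lemma cyc_rot (a b c : Fin n) (hab : a ≠ b) (hac : a ≠ c) (hbc : b ≠ c) :
    cyc a b c = cyc b c a := by
  apply Equiv.ext; intro i
  rw [cyc_apply a b c hab hac hbc, cyc_apply b c a hbc (Ne.symm hab) (Ne.symm hac)]
  split_ifs <;> grind

lemma cyc_ne_rev (a b c : Fin n) (hab : a ≠ b) (hac : a ≠ c) (hbc : b ≠ c) :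
    cyc a b c ≠ cyc a c b := by
  intro h
  have := congrArg (fun σ : Equiv.Perm (Fin n) => σ a) h
  simp only [cyc_app_a a b c hab hac hbc, cyc_app_a a c b hac hab (Ne.symm hbc)] at this
  exact hbc this

lemma hdist_cyc_near (a b c d : Fin n) (hab : a ≠ b) (hac : a ≠ c) (hbc : b ≠ c)
    (had : a ≠ d) (hbd : b ≠ d) (hcd : c ≠ d) :
    hdist (cyc a b d) (cyc a b c) = 3 := by
  have e := hdist_cyc (cyc a b d) a b c hab hac hbc
  rw [wt_cyc a b d hab had hbd] at e
  rw [if_pos (show cyc a b d a ≠ a by rw [cyc_app_a a b d hab had hbd]; exact Ne.symm hab),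
      if_pos (show cyc a b d b ≠ b by rw [cyc_app_b a b d hab had hbd]; exact Ne.symm hbd),
      if_neg (show ¬ cyc a b d c ≠ c from not_not_intro (by
        rw [cyc_apply a b d hab had hbd, if_neg (Ne.symm hac), if_neg (Ne.symm hbc), if_neg hcd])),
      if_pos (cyc_app_a a b d hab had hbd),
      if_neg (show ¬ cyc a b d b = c by rw [cyc_app_b a b d hab had hbd]; exact fun h => hcd h.symm),
      if_neg (show ¬ cyc a b d c = a by
        rw [cyc_apply a b d hab had hbd, if_neg (Ne.symm hac), if_neg (Ne.symm hbc), if_neg hcd]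
        exact Ne.symm hac)] at e
  omega

lemma hdist_cyc_far (a b c d : Fin n) (hab : a ≠ b) (hac : a ≠ c) (hbc : b ≠ c)
    (had : a ≠ d) (hbd : b ≠ d) (hcd : c ≠ d) :
    hdist (cyc a d b) (cyc a b c) = 4 := by
  have e := hdist_cyc (cyc a d b) a b c hab hac hbc
  rw [wt_cyc a d b had hab (Ne.symm hbd)] at e
  rw [if_pos (show cyc a d b a ≠ a by rw [cyc_app_a a d b had hab (Ne.symm hbd)]; exact Ne.symm had),
      if_pos (show cyc a d b b ≠ b by rw [cyc_app_c a d b had hab (Ne.symm hbd)]; exact hab),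
      if_neg (show ¬ cyc a d b c ≠ c from not_not_intro (by
        rw [cyc_apply a d b had hab (Ne.symm hbd), if_neg (Ne.symm hac), if_neg hcd, if_neg (Ne.symm hbc)])),
      if_neg (show ¬ cyc a d b a = b by rw [cyc_app_a a d b had hab (Ne.symm hbd)]; exact Ne.symm hbd),
      if_neg (show ¬ cyc a d b b = c by rw [cyc_app_c a d b had hab (Ne.symm hbd)]; exact hac),
      if_neg (show ¬ cyc a d b c = a by
        rw [cyc_apply a d b had hab (Ne.symm hbd), if_neg (Ne.symm hac), if_neg hcd, if_neg (Ne.symm hbc)]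
        exact Ne.symm hac)] at e
  omega

section Iso2
variable {u : Equiv.Perm (Fin n) → Equiv.Perm (Fin n)}
  (hbij : Function.Bijective u)
  (hiso : ∀ φ ψ, hdist (u φ) (u ψ) = hdist φ ψ)
  (h1 : u 1 = 1)
  (hswap : ∀ a b, a ≠ b → u (Equiv.swap a b) = Equiv.swap a b)

include hbij hiso h1 hswap

lemma cyc_or (a b c : Fin n) (hab : a ≠ b) (hac : a ≠ c) (hbc : b ≠ c) :
    u (cyc a b c) = cyc a b c ∨ u (cyc a b c) = cyc a c b := by
  obtain ⟨x, y, z, hxy, hxz, hyz, hU⟩ := wt_three_cyc (u (cyc a b c))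
    ((iso_wt hbij hiso h1 _).trans (wt_cyc a b c hab hac hbc))
  have hd : ∀ p q : Fin n, p ≠ q → hdist (cyc a b c) (Equiv.swap p q) = 2 →
      (cyc x y z p ≠ p ∧ cyc x y z q ≠ q) := by
    intro p q hpq h2
    apply cyc_swap_d2_supp hxy hxz hyz hpq
    rw [← hU, ← hswap p q hpq, hiso]
    exact h2
  obtain ⟨ma, mb⟩ := hd a b hab (cyc_swap_xy hab hac hbc)
  obtain ⟨_, mc⟩ := hd a c hac (cyc_swap_xz hab hac hbc)
  have ha' := cyc_moved hxy hxz hyz ma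
  have hb' := cyc_moved hxy hxz hyz mb
  have hc' := cyc_moved hxy hxz hyz mc
  rw [hU]
  rcases ha' with rfl | rfl | rfl <;> rcases hb' with rfl | rfl | rfl <;>
    rcases hc' with rfl | rfl | rfl <;>
    first
      | grind
      | exact Or.inl rfl
      | exact Or.inr rfl
      | exact Or.inl ((cyc_rot a b c hab hac hbc).symm)
      | exact Or.inl ((cyc_rot a b c hab hac hbc).trans (cyc_rot b c a hbc (Ne.symm hab) (Ne.symm hac))).symm
      | exact Or.inr (cyc_rot b a c (Ne.symm hab) hbc hac)
      | exact Or.inr ((cyc_rot c b a (Ne.symm hbc) (Ne.symm hac) (Ne.symm hab)).trans (cyc_rot b a c (Ne.symm hab) hbc hac))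
lemma cyc_fix_rev {a b c : Fin n} (hab : a ≠ b) (hac : a ≠ c) (hbc : b ≠ c)
    (hfix : u (cyc a b c) = cyc a b c) : u (cyc a c b) = cyc a c b := by
  rcases cyc_or hbij hiso h1 hswap a c b hac hab (Ne.symm hbc) with h | h
  · exact h
  · exact absurd (hbij.injective (h.trans hfix.symm))
      (cyc_ne_rev a c b hac hab (Ne.symm hbc))

lemma cyc_fix_extend {a b c d : Fin n} (hab : a ≠ b) (hac : a ≠ c) (hbc : b ≠ c)
    (had : a ≠ d) (hbd : b ≠ d) (hcd : c ≠ d)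
    (hfix : u (cyc a b c) = cyc a b c) : u (cyc a b d) = cyc a b d := by
  rcases cyc_or hbij hiso h1 hswap a b d hab had hbd with h | h
  · exact h
  · exfalso
    have h3 : hdist (u (cyc a b d)) (u (cyc a b c)) = 3 := by
      rw [hiso]; exact hdist_cyc_near a b c d hab hac hbc had hbd hcd
    rw [h, hfix, hdist_cyc_far a b c d hab hac hbc had hbd hcd] at h3
    omega

lemma fixes_from_base {p0 p1 p2 : Fin n} (h01 : p0 ≠ p1) (h02 : p0 ≠ p2) (h12 : p1 ≠ p2)
    (hbase : u (cyc p0 p1 p2) = cyc p0 p1 p2) :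
    ∀ z, z ≠ p0 → z ≠ p1 → u (cyc p0 p1 z) = cyc p0 p1 z := by
  intro z hz0 hz1
  by_cases hz2 : z = p2
  · rw [hz2]; exact hbase
  · exact cyc_fix_extend hbij hiso h1 hswap h01 h02 h12 (Ne.symm hz0) (Ne.symm hz1)
      (fun h => hz2 h.symm) hbase

lemma fixes2 {p0 p1 p2 : Fin n} (h01 : p0 ≠ p1) (h02 : p0 ≠ p2) (h12 : p1 ≠ p2)
    (hbase : u (cyc p0 p1 p2) = cyc p0 p1 p2) :
    ∀ y z, y ≠ p0 → z ≠ p0 → y ≠ z → u (cyc p0 y z) = cyc p0 y z := by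
  intro y z hy0 hz0 hyz
  by_cases hy1 : y = p1
  · subst hy1
    exact fixes_from_base hbij hiso h1 hswap h01 h02 h12 hbase z hz0 (Ne.symm hyz)
  · by_cases hz1 : z = p1
    · subst hz1
      exact cyc_fix_rev hbij hiso h1 hswap h01 (Ne.symm hy0) (fun h => hy1 h.symm)
        (fixes_from_base hbij hiso h1 hswap h01 h02 h12 hbase y hy0 hy1)
    · have F := fixes_from_base hbij hiso h1 hswap h01 h02 h12 hbase y hy0 hy1
      have G := cyc_fix_rev hbij hiso h1 hswap h01 (Ne.symm hy0) (fun h => hy1 h.symm) F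
      exact cyc_fix_extend hbij hiso h1 hswap (Ne.symm hy0) h01 hy1 (Ne.symm hz0)
        hyz (fun h => hz1 h.symm) G

lemma fixes3 {p0 p1 p2 : Fin n} (h01 : p0 ≠ p1) (h02 : p0 ≠ p2) (h12 : p1 ≠ p2)
    (hbase : u (cyc p0 p1 p2) = cyc p0 p1 p2) :
    ∀ x y z, x ≠ y → x ≠ z → y ≠ z → u (cyc x y z) = cyc x y z := by
  intro x y z hxy hxz hyz
  by_cases hx : x = p0
  · subst hx
    exact fixes2 hbij hiso h1 hswap h01 h02 h12 hbase y z (Ne.symm hxy) (Ne.symm hxz) hyz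
  · by_cases hy : y = p0
    · rw [hy, cyc_rot x p0 z hx hxz (by rw [← hy]; exact hyz)]
      exact fixes2 hbij hiso h1 hswap h01 h02 h12 hbase z x
        (fun h => hyz (hy.trans h.symm)) hx (fun h => hxz h.symm)
    · by_cases hz : z = p0
      · rw [hz, cyc_rot x y p0 hxy hx hy, cyc_rot y p0 x hy (Ne.symm hxy) (fun h => hx h.symm)]
        exact fixes2 hbij hiso h1 hswap h01 h02 h12 hbase x y hx hy hxy
      · have F := fixes2 hbij hiso h1 hswap h01 h02 h12 hbase y z hy hz hyz
        have G : u (cyc y z p0) = cyc y z p0 := by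
          rw [← cyc_rot p0 y z (Ne.symm hy) (Ne.symm hz) hyz]
          exact F
        have H := cyc_fix_extend (a := y) (b := z) (c := p0) (d := x) hbij hiso h1 hswap
          hyz hy hz (Ne.symm hxy) (Ne.symm hxz) (Ne.symm hx) G
        rw [cyc_rot x y z hxy hxz hyz]
        exact H

lemma iso_id {p0 p1 p2 : Fin n} (h01 : p0 ≠ p1) (h02 : p0 ≠ p2) (h12 : p1 ≠ p2)
    (hbase : u (cyc p0 p1 p2) = cyc p0 p1 p2) :
    ∀ φ, u φ = φ := by
  intro φ
  apply det φ (u φ)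
  · exact iso_wt hbij hiso h1 φ
  · intro a b hab
    conv_lhs => rw [← hswap a b hab]
    exact hiso φ _
  · intro a b c hab hac hbc
    conv_lhs => rw [← fixes3 hbij hiso h1 hswap h01 h02 h12 hbase a b c hab hac hbc]
    exact hiso φ _
end Iso2

lemma cyc_inv (a b c : Fin n) (hab : a ≠ b) (hac : a ≠ c) (hbc : b ≠ c) :
    (cyc a b c)⁻¹ = cyc a c b := by
  rw [inv_eq_iff_mul_eq_one]
  apply Equiv.ext; intro i
  simp only [Equiv.Perm.mul_apply, Equiv.Perm.one_apply]
  rw [cyc_apply a c b hac hab (Ne.symm hbc) i, cyc_apply a b c hab hac hbc]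
  split_ifs <;> grind

lemma conj_swap (s : Equiv.Perm (Fin n)) (a b : Fin n) :
    s⁻¹ * Equiv.swap (s a) (s b) * s = Equiv.swap a b := by
  apply Equiv.ext; intro i
  simp only [Equiv.Perm.mul_apply, Equiv.swap_apply_def, EmbeddingLike.apply_eq_iff_eq]
  split_ifs <;> simp_all

lemma central_eq_one (hn : 3 ≤ n) (c : Equiv.Perm (Fin n))
    (hc : ∀ φ, c * φ = φ * c) : c = 1 := by
  apply Equiv.ext; intro a
  by_contra ha
  rw [Equiv.Perm.one_apply] at ha
  obtain ⟨d, hda, hdb⟩ := exists_third hn a (c a)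
  have h := congrArg (fun σ : Equiv.Perm (Fin n) => σ a) (hc (Equiv.swap a d))
  simp only [Equiv.Perm.mul_apply, Equiv.swap_apply_left] at h
  rw [Equiv.swap_apply_of_ne_of_ne ha (Ne.symm hdb)] at h
  exact hda (c.injective h)

lemma unique_aux (hn : 3 ≤ n) (α β α' β' : Equiv.Perm (Fin n))
    (h : ∀ φ, α * φ * β⁻¹ = α' * φ * β'⁻¹) : α = α' ∧ β = β' := by
  have key : ∀ φ, (α'⁻¹ * α) * φ * (β'⁻¹ * β)⁻¹ = φ := by
    intro φ
    calc (α'⁻¹ * α) * φ * (β'⁻¹ * β)⁻¹ = α'⁻¹ * (α * φ * β⁻¹) * β' := by group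
      _ = α'⁻¹ * (α' * φ * β'⁻¹) * β' := by rw [h φ]
      _ = φ := by group
  have h1 : (α'⁻¹ * α) * (β'⁻¹ * β)⁻¹ = 1 := by
    have := key 1; rwa [mul_one] at this
  have hcd : α'⁻¹ * α = β'⁻¹ * β := mul_inv_eq_one.mp h1
  have hc : ∀ φ, (α'⁻¹ * α) * φ = φ * (α'⁻¹ * α) := by
    intro φ
    have hk := key φ
    rw [← hcd] at hk
    exact mul_inv_eq_iff_eq_mul.mp hk
  have hone : α'⁻¹ * α = 1 := central_eq_one hn _ hc
  constructor
  · exact (inv_mul_eq_one.mp hone).symm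
  · rw [hcd] at hone
    exact (inv_mul_eq_one.mp hone).symm

lemma mixed_impossible {p0 p1 p2 : Fin n} (h01 : p0 ≠ p1) (h02 : p0 ≠ p2) (h12 : p1 ≠ p2)
    (α β α' β' : Equiv.Perm (Fin n))
    (h : ∀ φ : Equiv.Perm (Fin n), α * φ * β⁻¹ = α' * φ⁻¹ * β'⁻¹) : False := by
  have key : ∀ φ : Equiv.Perm (Fin n), (α'⁻¹ * α) * φ * (β'⁻¹ * β)⁻¹ = φ⁻¹ := by
    intro φ
    calc (α'⁻¹ * α) * φ * (β'⁻¹ * β)⁻¹ = α'⁻¹ * (α * φ * β⁻¹) * β' := by group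
      _ = α'⁻¹ * (α' * φ⁻¹ * β'⁻¹) * β' := by rw [h φ]
      _ = φ⁻¹ := by group
  have h1 : (α'⁻¹ * α) * (β'⁻¹ * β)⁻¹ = 1 := by
    have := key 1; rwa [mul_one, inv_one] at this
  have hAX : α'⁻¹ * α = β'⁻¹ * β := mul_inv_eq_one.mp h1
  have key2 : ∀ φ : Equiv.Perm (Fin n), (α'⁻¹ * α) * φ * (α'⁻¹ * α)⁻¹ = φ⁻¹ := by
    intro φ
    have := key φ
    rwa [← hAX] at this
  have anti : ∀ x y : Equiv.Perm (Fin n), y⁻¹ * x⁻¹ = x⁻¹ * y⁻¹ := by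
    intro x y
    have h2 := key2 (x * y)
    rw [mul_inv_rev] at h2
    calc y⁻¹ * x⁻¹ = (α'⁻¹ * α) * (x * y) * (α'⁻¹ * α)⁻¹ := h2.symm
      _ = ((α'⁻¹ * α) * x * (α'⁻¹ * α)⁻¹) * ((α'⁻¹ * α) * y * (α'⁻¹ * α)⁻¹) := by group
      _ = x⁻¹ * y⁻¹ := by rw [key2 x, key2 y]
  have hv0 := anti (Equiv.swap p0 p1) (Equiv.swap p0 p2)
  rw [Equiv.swap_inv, Equiv.swap_inv] at hv0
  have hv := congrArg (fun σ : Equiv.Perm (Fin n) => σ p2) hv0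
  simp only [Equiv.Perm.mul_apply] at hv
  rw [Equiv.swap_apply_of_ne_of_ne (Ne.symm h02) (Ne.symm h12), Equiv.swap_apply_right,
    Equiv.swap_apply_left] at hv
  exact h01 hv

end Aux

/-- For `n ≥ 3`, every isometry `t` of `(Sym(n), d_H)` has the form
`t φ = α * φ * β⁻¹` for all `φ`, or `t φ = α * φ⁻¹ * β⁻¹` for all `φ`,
and this representation is unique. -/
theorem hamming_isometry_unique_decomposition (n : ℕ) (hn : 3 ≤ n)
    (t : Equiv.Perm (Fin n) → Equiv.Perm (Fin n))
    (hbij : Function.Bijective t)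
    (hiso : ∀ φ ψ, hdist (t φ) (t ψ) = hdist φ ψ) :
    ∃! p : Equiv.Perm (Fin n) × Equiv.Perm (Fin n) × Bool,
      ∀ φ, t φ = p.1 * (if p.2.2 then φ⁻¹ else φ) * p.2.1⁻¹ := by
  classical
  have h0 : (0 : ℕ) < n := by omega
  have h1n : (1 : ℕ) < n := by omega
  have h2n : (2 : ℕ) < n := by omega
  set p0 : Fin n := ⟨0, h0⟩ with hp0
  set p1 : Fin n := ⟨1, h1n⟩ with hp1
  set p2 : Fin n := ⟨2, h2n⟩ with hp2
  have h01 : p0 ≠ p1 := by simp [hp0, hp1, Fin.ext_iff]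
  have h02 : p0 ≠ p2 := by simp [hp0, hp2, Fin.ext_iff]
  have h12 : p1 ≠ p2 := by simp [hp1, hp2, Fin.ext_iff]
  set e := t 1 with he
  have hbij1 : Function.Bijective (fun φ => e⁻¹ * t φ) :=
    (Equiv.mulLeft e⁻¹).bijective.comp hbij
  have hiso1 : ∀ φ ψ, hdist (e⁻¹ * t φ) (e⁻¹ * t ψ) = hdist φ ψ :=
    fun φ ψ => (hdist_mul_left _ _ _).trans (hiso φ ψ)
  have h11 : e⁻¹ * t 1 = 1 := by rw [← he]; group
  obtain ⟨s, hs⟩ := sigma_exists (u := fun φ => e⁻¹ * t φ) hbij1 hiso1 h11 hn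
  have hbij2 : Function.Bijective (fun φ => s⁻¹ * (e⁻¹ * t φ) * s) :=
    (Equiv.mulRight s).bijective.comp ((Equiv.mulLeft s⁻¹).bijective.comp hbij1)
  have hiso2 : ∀ φ ψ, hdist (s⁻¹ * (e⁻¹ * t φ) * s) (s⁻¹ * (e⁻¹ * t ψ) * s) = hdist φ ψ :=
    fun φ ψ => (hdist_mul_right _ _ _).trans ((hdist_mul_left _ _ _).trans (hiso1 φ ψ))
  have h21 : s⁻¹ * (e⁻¹ * t 1) * s = 1 := by
    rw [h11]; group
  have hswap2 : ∀ a b, a ≠ b → s⁻¹ * (e⁻¹ * t (Equiv.swap a b)) * s = Equiv.swap a b := by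
    intro a b hab
    rw [hs a b hab]
    exact conj_swap s a b
  rcases cyc_or (u := fun φ => s⁻¹ * (e⁻¹ * t φ) * s) hbij2 hiso2 h21 hswap2
    p0 p1 p2 h01 h02 h12 with hb | hb
  · -- identity case
    have hid := iso_id (u := fun φ => s⁻¹ * (e⁻¹ * t φ) * s) hbij2 hiso2 h21 hswap2
      h01 h02 h12 hb
    have hp : ∀ φ, t φ = (e * s) * φ * s⁻¹ := by
      intro φ
      have h : s⁻¹ * (e⁻¹ * t φ) * s = φ := hid φ
      calc t φ = e * (s * (s⁻¹ * (e⁻¹ * t φ) * s) * s⁻¹) := by group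
        _ = e * (s * φ * s⁻¹) := by rw [h]
        _ = (e * s) * φ * s⁻¹ := by group
    refine ⟨(e * s, s, false), fun φ => hp φ, ?_⟩
    rintro ⟨α, β, bb⟩ hq
    cases bb
    · have hq' : ∀ φ, t φ = α * φ * β⁻¹ := hq
      have hcomp : ∀ φ, α * φ * β⁻¹ = (e * s) * φ * s⁻¹ :=
        fun φ => (hq' φ).symm.trans (hp φ)
      obtain ⟨hα, hβ⟩ := unique_aux hn α β (e * s) s hcomp
      rw [hα, hβ]
    · exfalso
      have hq' : ∀ φ, t φ = α * φ⁻¹ * β⁻¹ := hq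
      have hcomp : ∀ φ : Equiv.Perm (Fin n), (e * s) * φ * s⁻¹ = α * φ⁻¹ * β⁻¹ :=
        fun φ => (hp φ).symm.trans (hq' φ)
      exact mixed_impossible h01 h02 h12 (e * s) s α β hcomp
  · -- inversion case
    have hbij3 : Function.Bijective (fun φ => (s⁻¹ * (e⁻¹ * t φ) * s)⁻¹) :=
      (Equiv.inv (Equiv.Perm (Fin n))).bijective.comp hbij2
    have hiso3 : ∀ φ ψ, hdist (s⁻¹ * (e⁻¹ * t φ) * s)⁻¹ (s⁻¹ * (e⁻¹ * t ψ) * s)⁻¹ = hdist φ ψ :=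
      fun φ ψ => (hdist_inv _ _).trans (hiso2 φ ψ)
    have h31 : (s⁻¹ * (e⁻¹ * t 1) * s)⁻¹ = 1 := by
      rw [h21, inv_one]
    have hswap3 : ∀ a b, a ≠ b → (s⁻¹ * (e⁻¹ * t (Equiv.swap a b)) * s)⁻¹ = Equiv.swap a b := by
      intro a b hab
      rw [hswap2 a b hab]
      exact Equiv.swap_inv a b
    have hb3 : (s⁻¹ * (e⁻¹ * t (cyc p0 p1 p2)) * s)⁻¹ = cyc p0 p1 p2 := by
      rw [hb]
      exact cyc_inv p0 p2 p1 h02 h01 (Ne.symm h12)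
    have hid := iso_id (u := fun φ => (s⁻¹ * (e⁻¹ * t φ) * s)⁻¹) hbij3 hiso3 h31 hswap3
      h01 h02 h12 hb3
    have hp : ∀ φ, t φ = (e * s) * φ⁻¹ * s⁻¹ := by
      intro φ
      have h : (s⁻¹ * (e⁻¹ * t φ) * s)⁻¹ = φ := hid φ
      have h2 : s⁻¹ * (e⁻¹ * t φ) * s = φ⁻¹ := inv_eq_iff_eq_inv.mp h
      calc t φ = e * (s * (s⁻¹ * (e⁻¹ * t φ) * s) * s⁻¹) := by group
        _ = e * (s * φ⁻¹ * s⁻¹) := by rw [h2]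
        _ = (e * s) * φ⁻¹ * s⁻¹ := by group
    refine ⟨(e * s, s, true), fun φ => hp φ, ?_⟩
    rintro ⟨α, β, bb⟩ hq
    cases bb
    · exfalso
      have hq' : ∀ φ, t φ = α * φ * β⁻¹ := hq
      have hcomp : ∀ φ : Equiv.Perm (Fin n), α * φ * β⁻¹ = (e * s) * φ⁻¹ * s⁻¹ :=
        fun φ => (hq' φ).symm.trans (hp φ)
      exact mixed_impossible h01 h02 h12 α β (e * s) s hcomp
    · have hq' : ∀ φ, t φ = α * φ⁻¹ * β⁻¹ := hq
      have hcomp : ∀ ψ : Equiv.Perm (Fin n), α * ψ * β⁻¹ = (e * s) * ψ * s⁻¹ := by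
        intro ψ
        have h3 := (hq' ψ⁻¹).symm.trans (hp ψ⁻¹)
        rwa [inv_inv] at h3
      obtain ⟨hα, hβ⟩ := unique_aux hn α β (e * s) s hcomp
      rw [hα, hβ]
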